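/- If a Latin square L of order n (n ≥ 1) has an orthogonal mate, then the transversal design associated to L is resolvable into n parallel classes: the collection of the n^2 triples {(0,i), (1,j), (2, L i j)} ⊆ Fin 3 × Fin n (for i, j ∈ Fin n) can be partitioned into n classes, each consisting of n pairwise disjoint triples whose union is all of Fin 3 × Fin n. -/
import Mathlib


/-- A Latin square of order `n`: each row and each column is a bijection. -/
def IsLatinSquare {n : ℕ} (L : Fin n → Fin n → Fin n) : Prop :=
  (∀ i, Function.Bijective fun j => L i j) ∧ (∀ j, Function.Bijective fun i => L i j)

/-- Two Latin squares are orthogonal if superimposing them yields all ordered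
pairs without repetition. -/
def AreOrthogonal {n : ℕ} (L M : Fin n → Fin n → Fin n) : Prop :=
  Function.Injective fun p : Fin n × Fin n => (L p.1 p.2, M p.1 p.2)

/-- The transversal design associated to a Latin square `L` of order `n`:
the `n ^ 2` triples `{(0, i), (1, j), (2, L i j)}` on the point set `Fin 3 × Fin n`. -/
def transversalDesign {n : ℕ} (L : Fin n → Fin n → Fin n) :
    Finset (Finset (Fin 3 × Fin n)) :=
  Finset.image
    (fun p : Fin n × Fin n => ({(0, p.1), (1, p.2), (2, L p.1 p.2)} : Finset (Fin 3 × Fin n)))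
    Finset.univ

/-- A parallel class: a collection of pairwise disjoint subsets whose union is everything. -/
def IsParallelClass {P : Type*} [Fintype P] [DecidableEq P] (C : Finset (Finset P)) : Prop :=
  (∀ b ∈ C, ∀ b' ∈ C, b ≠ b' → Disjoint b b') ∧ C.biUnion id = Finset.univ

lemma triple_injective {n : ℕ} (L : Fin n → Fin n → Fin n) :
    Function.Injective
      (fun p : Fin n × Fin n => ({(0, p.1), (1, p.2), (2, L p.1 p.2)} : Finset (Fin 3 × Fin n))) := by
  intro p q h
  simp only at h
  have h1 : ((0 : Fin 3), p.1) ∈ ({(0, q.1), (1, q.2), (2, L q.1 q.2)} : Finset (Fin 3 × Fin n)) := by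
    rw [← h]; simp
  have h2 : ((1 : Fin 3), p.2) ∈ ({(0, q.1), (1, q.2), (2, L q.1 q.2)} : Finset (Fin 3 × Fin n)) := by
    rw [← h]; simp
  simp only [Finset.mem_insert, Finset.mem_singleton, Prod.ext_iff] at h1 h2
  have e1 : p.1 = q.1 := by
    rcases h1 with ⟨_, h⟩ | ⟨h, _⟩ | ⟨h, _⟩
    · exact ‹_›
    · exact absurd h (by decide)
    · exact absurd h (by decide)
  have e2 : p.2 = q.2 := by
    rcases h2 with ⟨h, _⟩ | ⟨_, h⟩ | ⟨h, _⟩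
    · exact absurd h (by decide)
    · exact ‹_›
    · exact absurd h (by decide)
  exact Prod.ext e1 e2

/-- If a Latin square `L` of order `n ≥ 1` has an orthogonal mate, then the transversal
design associated to `L` (which consists of `n ^ 2` triples) can be partitioned into
`n` parallel classes, each consisting of `n` pairwise disjoint triples covering
`Fin 3 × Fin n`. -/
theorem transversalDesign_resolvable_of_orthogonal_mate {n : ℕ} (hn : 1 ≤ n)
    (L : Fin n → Fin n → Fin n) (hL : IsLatinSquare L)
    (hmate : ∃ M : Fin n → Fin n → Fin n, IsLatinSquare M ∧ AreOrthogonal L M) :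
    (transversalDesign L).card = n ^ 2 ∧
      ∃ F : Finpartition (transversalDesign L), F.parts.card = n ∧
        ∀ C ∈ F.parts, C.card = n ∧ IsParallelClass C := by
  obtain ⟨M, hM, horth⟩ := hmate
  set T : Fin n × Fin n → Finset (Fin 3 × Fin n) :=
    fun p => ({(0, p.1), (1, p.2), (2, L p.1 p.2)} : Finset (Fin 3 × Fin n)) with hT
  have hTinj : Function.Injective T := triple_injective L
  -- card of the design
  have hcard : (transversalDesign L).card = n ^ 2 := by
    rw [transversalDesign, Finset.card_image_of_injective _ hTinj]
    simp [sq]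
  refine ⟨hcard, ?_⟩
  -- classes
  set C : Fin n → Finset (Finset (Fin 3 × Fin n)) :=
    fun c => Finset.image T (Finset.univ.filter (fun p : Fin n × Fin n => M p.1 p.2 = c)) with hC
  -- each class has a member for each row index
  have hmem : ∀ (c : Fin n) (i : Fin n), ∃ j, M i j = c := fun c i => (hM.1 i).2 c
  have hmem' : ∀ (c : Fin n) (j : Fin n), ∃ i, M i j = c := fun c j => (hM.2 j).2 c
  have hCne : ∀ c, (C c).Nonempty := by
    intro c
    obtain ⟨j, hj⟩ := hmem c ⟨0, hn⟩
    exact ⟨T (⟨0, hn⟩, j), Finset.mem_image.2 ⟨(⟨0, hn⟩, j), by simpa using hj, rfl⟩⟩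
  -- determine class value from a member
  have hCval : ∀ c c' : Fin n, ∀ t, t ∈ C c → t ∈ C c' → c = c' := by
    intro c c' t ht ht'
    obtain ⟨p, hp, hpt⟩ := Finset.mem_image.1 ht
    obtain ⟨q, hq, hqt⟩ := Finset.mem_image.1 ht'
    have : p = q := hTinj (by rw [hpt, hqt])
    simp only [Finset.mem_filter] at hp hq
    rw [← hp.2, ← hq.2, this]
  have hCinj : Function.Injective C := by
    intro c c' h
    obtain ⟨t, ht⟩ := hCne c
    exact hCval c c' t ht (h ▸ ht)
  -- disjointness of blocks within / across classes
  have hdisj : ∀ (p q : Fin n × Fin n), M p.1 p.2 = M q.1 q.2 → p ≠ q → Disjoint (T p) (T q) := by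
    intro p q hMeq hne
    rw [Finset.disjoint_left]
    intro x hx hx'
    simp only [hT, Finset.mem_insert, Finset.mem_singleton] at hx hx'
    rcases hx with rfl | rfl | rfl
    · rcases hx' with h | h | h
      · have h1 : p.1 = q.1 := (Prod.ext_iff.1 h).2
        have h2 : p.2 = q.2 :=
          (hM.1 p.1).1 (show M p.1 p.2 = M p.1 q.2 by rw [hMeq, h1])
        exact hne (Prod.ext h1 h2)
      · exact absurd (show (0 : Fin 3) = 1 from congrArg Prod.fst h) (by decide)
      · exact absurd (show (0 : Fin 3) = 2 from congrArg Prod.fst h) (by decide)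
    · rcases hx' with h | h | h
      · exact absurd (show (1 : Fin 3) = 0 from congrArg Prod.fst h) (by decide)
      · have h2 : p.2 = q.2 := (Prod.ext_iff.1 h).2
        have h1 : p.1 = q.1 :=
          (hM.2 p.2).1 (show M p.1 p.2 = M q.1 p.2 by rw [hMeq, h2])
        exact hne (Prod.ext h1 h2)
      · exact absurd (show (1 : Fin 3) = 2 from congrArg Prod.fst h) (by decide)
    · rcases hx' with h | h | h
      · exact absurd (show (2 : Fin 3) = 0 from congrArg Prod.fst h) (by decide)
      · exact absurd (show (2 : Fin 3) = 1 from congrArg Prod.fst h) (by decide)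
      · have hLeq : L p.1 p.2 = L q.1 q.2 := (Prod.ext_iff.1 h).2
        exact hne (horth (Prod.ext hLeq hMeq))
  -- classes are pairwise disjoint as finsets of blocks
  have hCdisj : ∀ c c' : Fin n, c ≠ c' → Disjoint (C c) (C c') := by
    intro c c' hne
    rw [Finset.disjoint_left]
    intro t ht ht'
    exact hne (hCval c c' t ht ht')
  -- each class covers everything
  have hcover : ∀ c, (C c).biUnion id = Finset.univ := by
    intro c
    apply Finset.eq_univ_iff_forall.2
    rintro ⟨a, k⟩
    simp only [Finset.mem_biUnion, id]
    fin_cases a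
    · obtain ⟨j, hj⟩ := hmem c k
      exact ⟨T (k, j), Finset.mem_image.2 ⟨(k, j), by simpa using hj, rfl⟩, by simp [hT]⟩
    · obtain ⟨i, hi⟩ := hmem' c k
      exact ⟨T (i, k), Finset.mem_image.2 ⟨(i, k), by simpa using hi, rfl⟩, by simp [hT]⟩
    · have hsurj : Function.Surjective
          (fun p : Fin n × Fin n => (L p.1 p.2, M p.1 p.2)) :=
        Finite.surjective_of_injective horth
      obtain ⟨p, hp⟩ := hsurj (k, c)
      have hLp : L p.1 p.2 = k := (Prod.ext_iff.1 hp).1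
      have hMp : M p.1 p.2 = c := (Prod.ext_iff.1 hp).2
      exact ⟨T p, Finset.mem_image.2 ⟨p, by simpa using hMp, rfl⟩, by simp [hT, hLp]⟩
  -- each class has n blocks
  have hCcard : ∀ c, (C c).card = n := by
    intro c
    rw [hC]
    rw [Finset.card_image_of_injective _ hTinj]
    have key : (Finset.univ.filter (fun p : Fin n × Fin n => M p.1 p.2 = c)).card
        = (Finset.univ : Finset (Fin n)).card := by
      apply Finset.card_bij' (fun p _ => p.1) (fun i _ =>
        (i, (Equiv.ofBijective _ (hM.1 i)).symm c))
      · intro p hp; exact Finset.mem_univ _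
      · intro i _
        simp only [Finset.mem_filter, Finset.mem_univ, true_and]
        exact (Equiv.ofBijective _ (hM.1 i)).apply_symm_apply c
      · intro p hp
        simp only [Finset.mem_filter, Finset.mem_univ, true_and] at hp
        have h2 : (Equiv.ofBijective _ (hM.1 p.1)).symm c = p.2 := by
          apply (Equiv.ofBijective _ (hM.1 p.1)).injective
          rw [Equiv.apply_symm_apply]
          exact hp ▸ rfl
        rw [h2]
      · intro i _; rfl
    rw [key, Finset.card_univ, Fintype.card_fin]
  -- build the Finpartition
  refine ⟨⟨Finset.image C Finset.univ, ?_, ?_, ?_⟩, ?_, ?_⟩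
  · rw [Finset.supIndep_iff_pairwiseDisjoint]
    intro s hs t ht hst
    simp only [Finset.coe_image, Set.mem_image] at hs ht
    obtain ⟨c, _, rfl⟩ := hs
    obtain ⟨c', _, rfl⟩ := ht
    exact hCdisj c c' (fun h => hst (by rw [h]))
  · apply le_antisymm
    · rw [Finset.sup_le_iff]
      intro s hs
      obtain ⟨c, _, rfl⟩ := Finset.mem_image.1 hs
      intro t ht
      obtain ⟨p, _, rfl⟩ := Finset.mem_image.1 ht
      exact Finset.mem_image.2 ⟨p, Finset.mem_univ _, rfl⟩
    · intro t ht
      obtain ⟨p, _, rfl⟩ := Finset.mem_image.1 ht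
      have : T p ∈ C (M p.1 p.2) := by
        simp only [hC, Finset.mem_image, Finset.mem_filter]
        exact ⟨p, ⟨Finset.mem_univ _, rfl⟩, rfl⟩
      have hmemb : C (M p.1 p.2) ∈ Finset.image C Finset.univ :=
        Finset.mem_image_of_mem C (Finset.mem_univ _)
      exact (Finset.le_sup (f := id) hmemb : C (M p.1 p.2) ≤ _) this
  · intro hbot
    obtain ⟨c, _, hc⟩ := Finset.mem_image.1 hbot
    obtain ⟨t, ht⟩ := hCne c
    rw [hc] at ht
    exact absurd ht (Finset.notMem_empty t)
  · rw [Finset.card_image_of_injective _ hCinj, Finset.card_univ, Fintype.card_fin]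
  · intro Cl hCl
    obtain ⟨c, _, rfl⟩ := Finset.mem_image.1 hCl
    refine ⟨hCcard c, ?_, hcover c⟩
    intro b hb b' hb' hbne
    obtain ⟨p, hp, rfl⟩ := Finset.mem_image.1 hb
    obtain ⟨q, hq, rfl⟩ := Finset.mem_image.1 hb'
    simp only [Finset.mem_filter] at hp hq
    exact hdisj p q (by rw [hp.2, hq.2]) (fun h => hbne (by rw [h]))
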